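/- Let Φ = (1+√5)/2 and ψ(x) = log_Φ(√5·(log_Φ(√5·x) + x) − 5 + 3/x) − 2. Then for every natural number n ≥ 2, ψ(F_{n+2} − n + 1) ≥ n. -/

import Mathlib

open Real

private lemma hs5 : Real.sqrt 5 ^ 2 = 5 := Real.sq_sqrt (by norm_num)
private lemma s5_pos : (0:ℝ) < Real.sqrt 5 := Real.sqrt_pos.mpr (by norm_num)
private lemma s5_lb : (2.236067 : ℝ) ≤ Real.sqrt 5 := by nlinarith [hs5, s5_pos.le]
private lemma s5_ub : Real.sqrt 5 ≤ 2.236068 := by nlinarith [hs5, s5_pos.le]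
private lemma gold_lb : (1.6180335 : ℝ) ≤ goldenRatio := by
  have := s5_lb; unfold goldenRatio; linarith
private lemma gold_ub : goldenRatio ≤ 1.618034 := by
  have := s5_ub; unfold goldenRatio; linarith

private lemma logb_ge {y : ℝ} (p q : ℕ) (hq : (0:ℝ) < (q:ℝ)) (hy : 0 < y)
    (h : goldenRatio ^ p ≤ y ^ q) : (p : ℝ) / (q:ℝ) ≤ Real.logb goldenRatio y := by
  have hlφ : 0 < Real.log goldenRatio := Real.log_pos one_lt_goldenRatio
  have h2 : Real.log (goldenRatio ^ p) ≤ Real.log (y ^ q) :=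
    Real.log_le_log (pow_pos goldenRatio_pos p) h
  rw [Real.log_pow, Real.log_pow] at h2
  rw [Real.logb, div_le_div_iff₀ hq hlφ]
  linarith

private lemma log_chord {a b y : ℝ} (ha : 0 < a) (hab : a < b) (h1 : a ≤ y) (h2 : y ≤ b) :
    ((b - y) * Real.log a + (y - a) * Real.log b) / (b - a) ≤ Real.log y := by
  have hb : 0 < b := lt_trans ha hab
  have hd : 0 < b - a := by linarith
  have hc := strictConcaveOn_log_Ioi.concaveOn.2 (Set.mem_Ioi.mpr ha) (Set.mem_Ioi.mpr hb)
    (show (0:ℝ) ≤ (b - y)/(b - a) from div_nonneg (by linarith) hd.le)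
    (show (0:ℝ) ≤ (y - a)/(b - a) from div_nonneg (by linarith) hd.le)
    (show (b - y)/(b - a) + (y - a)/(b - a) = 1 by field_simp; ring)
  rw [smul_eq_mul, smul_eq_mul, smul_eq_mul, smul_eq_mul] at hc
  have key : (b - y)/(b - a) * a + (y - a)/(b - a) * b = y := by field_simp; ring
  rw [key] at hc
  have heq : ((b - y) * Real.log a + (y - a) * Real.log b) / (b - a)
      = (b - y)/(b - a) * Real.log a + (y - a)/(b - a) * Real.log b := by ring
  rw [heq]; exact hc

private lemma gold_pow_lb : ∀ n : ℕ, 6 ≤ n → 3.5 * ((n:ℝ) - 1) ≤ goldenRatio ^ n := by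
  intro n hn
  induction n, hn using Nat.le_induction with
  | base =>
      have h : (1.6180335:ℝ) ^ 6 ≤ goldenRatio ^ 6 :=
        pow_le_pow_left₀ (by norm_num) gold_lb 6
      norm_num at h ⊢
      linarith
  | succ n hn ih =>
      have hn' : (6:ℝ) ≤ (n:ℝ) := by exact_mod_cast hn
      have h1 : 3.5 * ((n:ℝ) + 1 - 1) ≤ 1.6180335 * (3.5 * ((n:ℝ) - 1)) := by nlinarith
      have h2 : (1.6180335:ℝ) * (3.5 * ((n:ℝ) - 1)) ≤ goldenRatio * goldenRatio ^ n := by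
        apply mul_le_mul gold_lb ih (by nlinarith) goldenRatio_pos.le
      push_cast
      calc 3.5 * ((n:ℝ) + 1 - 1) ≤ goldenRatio * goldenRatio ^ n := by linarith
        _ = goldenRatio ^ (n+1) := by ring

private lemma conj_pow_bound (k : ℕ) (hk : 4 ≤ k) : |goldenConj ^ k| ≤ 0.15 := by
  have h1 : |goldenConj| ≤ 0.62 := by
    rw [abs_le]
    constructor
    · unfold goldenConj; nlinarith [s5_lb, s5_ub]
    · unfold goldenConj; nlinarith [s5_lb, s5_ub]
  calc |goldenConj ^ k| = |goldenConj| ^ k := abs_pow _ _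
    _ ≤ 0.62 ^ k := pow_le_pow_left₀ (abs_nonneg _) h1 k
    _ ≤ 0.62 ^ 4 := pow_le_pow_of_le_one (by norm_num) (by norm_num) hk
    _ ≤ 0.15 := by norm_num

private lemma binet (k : ℕ) :
    Real.sqrt 5 * (Nat.fib k : ℝ) = goldenRatio ^ k - goldenConj ^ k := by
  rw [Real.coe_fib_eq]
  field_simp

private lemma fib_lb (n : ℕ) (hn : 2 ≤ n) : n + 1 ≤ Nat.fib (n + 2) := by
  rcases Nat.lt_or_ge n 3 with h | h
  · interval_cases n
    · norm_num [Nat.fib]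
  · have h5 : 5 ≤ n + 2 := by omega
    have := Nat.le_fib_self h5
    omega

private lemma key_gen (n : ℕ) (hn : 6 ≤ n) :
    goldenRatio ^ (n+2) ≤
      Real.sqrt 5 * (Real.logb goldenRatio (Real.sqrt 5 * ((Nat.fib (n+2) : ℝ) - n + 1))
        + ((Nat.fib (n+2) : ℝ) - n + 1)) - 5 + 3 / ((Nat.fib (n+2) : ℝ) - n + 1) := by
  have hn' : (6:ℝ) ≤ (n:ℝ) := by exact_mod_cast hn
  set X : ℝ := (Nat.fib (n+2) : ℝ) - n + 1 with hXdef
  have hfib : (n:ℝ) + 1 ≤ (Nat.fib (n+2) : ℝ) := by exact_mod_cast fib_lb n (by omega)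
  have hX2 : (2:ℝ) ≤ X := by rw [hXdef]; linarith
  set y : ℝ := Real.sqrt 5 * X with hydef
  set g : ℝ := goldenConj ^ (n+2) with hgdef
  have hy : y = goldenRatio ^ (n+2) - g - Real.sqrt 5 * ((n:ℝ) - 1) := by
    have hb := binet (n+2)
    rw [hydef, hXdef, hgdef]
    have : Real.sqrt 5 * ((Nat.fib (n+2) : ℝ) - n + 1)
        = Real.sqrt 5 * (Nat.fib (n+2) : ℝ) - Real.sqrt 5 * ((n:ℝ) - 1) := by ring
    rw [this, hb]
  have hgabs := conj_pow_bound (n+2) (by omega)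
  rw [abs_le] at hgabs
  obtain ⟨hg1, hg2⟩ := hgabs
  rw [← hgdef] at hg1 hg2
  have hpow : 3.5 * ((n:ℝ) - 1) ≤ goldenRatio ^ n := gold_pow_lb n hn
  set A : ℝ := goldenRatio ^ (n+1) with hAdef
  set B : ℝ := goldenRatio ^ (n+2) with hBdef
  set P : ℝ := goldenRatio ^ n with hPdef
  have hBA : B - A = P := goldenRatio_pow_sub_goldenRatio_pow n
  have hP : (0:ℝ) < P := pow_pos goldenRatio_pos n
  have hA : (0:ℝ) < A := pow_pos goldenRatio_pos (n+1)
  have hab : A < B := pow_lt_pow_right₀ one_lt_goldenRatio (by omega)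
  have hs5n : Real.sqrt 5 * ((n:ℝ) - 1) ≤ 2.236068 * ((n:ℝ) - 1) := by nlinarith [s5_ub]
  have hs5n' : 2.236067 * ((n:ℝ) - 1) ≤ Real.sqrt 5 * ((n:ℝ) - 1) := by nlinarith [s5_lb]
  have h_low : A ≤ y := by
    rw [hy]; linarith
  have h_up : y ≤ B := by
    rw [hy]; linarith
  set c : ℝ := (B - y) / P with hcdef
  have hc0 : 0 ≤ c := div_nonneg (by linarith) hP.le
  have hc : c ≤ 0.65 := by
    rw [hcdef, div_le_iff₀ hP]
    have : B - y = g + Real.sqrt 5 * ((n:ℝ) - 1) := by rw [hy]; ring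
    rw [this]
    nlinarith [hpow]
  have hlogφ : 0 < Real.log goldenRatio := Real.log_pos one_lt_goldenRatio
  have hlb : (n:ℝ) + 2 - c ≤ Real.logb goldenRatio y := by
    rw [Real.logb, le_div_iff₀ hlogφ]
    have hch := log_chord hA hab h_low h_up
    rw [hAdef, hBdef, Real.log_pow, Real.log_pow, ← hAdef, ← hBdef] at hch
    push_cast at hch
    have hAeq : A = B - P := by linarith
    have heq : ((B - y) * (((n:ℝ) + 1) * Real.log goldenRatio)
          + (y - A) * (((n:ℝ) + 2) * Real.log goldenRatio)) / (B - A)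
        = ((n:ℝ) + 2 - c) * Real.log goldenRatio := by
      rw [hcdef, hAeq]
      field_simp [hP.ne']
      ring
    rw [heq] at hch
    exact hch
  have h1 : Real.sqrt 5 * ((n:ℝ) + 2 - c) ≤ Real.sqrt 5 * Real.logb goldenRatio y :=
    mul_le_mul_of_nonneg_left hlb s5_pos.le
  have hsc : Real.sqrt 5 * c ≤ 2.236068 * 0.65 :=
    mul_le_mul s5_ub hc hc0 (by norm_num)
  have h3x : 0 < 3 / X := by positivity
  clear_value X y g A B P c
  linarith [h1, hsc, hg2, h3x, s5_lb, hy, hydef]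

private lemma gpow_ub (k : ℕ) : goldenRatio ^ k ≤ 1.618034 ^ k :=
  pow_le_pow_left₀ goldenRatio_pos.le gold_ub k

private lemma key (n : ℕ) (hn : 2 ≤ n) :
    goldenRatio ^ (n+2) ≤
      Real.sqrt 5 * (Real.logb goldenRatio (Real.sqrt 5 * ((Nat.fib (n+2) : ℝ) - n + 1))
        + ((Nat.fib (n+2) : ℝ) - n + 1)) - 5 + 3 / ((Nat.fib (n+2) : ℝ) - n + 1) := by
  rcases Nat.lt_or_ge n 6 with h6 | h6
  · interval_cases n
    · -- n = 2, X = 2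
      have hf : (Nat.fib 4 : ℝ) = 3 := by norm_num [Nat.fib]
      norm_num [hf]
      have hl : ((3:ℕ) : ℝ) / ((1:ℕ) : ℝ) ≤ Real.logb goldenRatio (Real.sqrt 5 * 2) := by
        apply logb_ge 3 1 (by norm_num) (by positivity)
        calc goldenRatio ^ 3 ≤ 1.618034 ^ 3 := gpow_ub 3
          _ ≤ 4.472134 := by norm_num
          _ ≤ (Real.sqrt 5 * 2) ^ 1 := by simpa using by linarith [s5_lb]
      norm_num at hl
      have h5L : 2.236067 * 3 ≤ Real.sqrt 5 * Real.logb goldenRatio (Real.sqrt 5 * 2) :=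
        mul_le_mul s5_lb hl (by norm_num) s5_pos.le
      have hub : goldenRatio ^ 4 ≤ 6.8542 := (gpow_ub 4).trans (by norm_num)
      linarith [s5_lb]
    · -- n = 3, X = 3
      have hf : (Nat.fib 5 : ℝ) = 5 := by norm_num [Nat.fib]
      norm_num [hf]
      have hl : ((15:ℕ) : ℝ) / ((4:ℕ) : ℝ) ≤ Real.logb goldenRatio (Real.sqrt 5 * 3) := by
        apply logb_ge 15 4 (by norm_num) (by positivity)
        have h4 : (Real.sqrt 5 * 3) ^ 4 = 2025 := by
          rw [mul_pow, show (Real.sqrt 5) ^ 4 = ((Real.sqrt 5) ^ 2) ^ 2 by ring, hs5]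
          norm_num
        rw [h4]
        calc goldenRatio ^ 15 ≤ 1.618034 ^ 15 := gpow_ub 15
          _ ≤ 2025 := by norm_num
      norm_num at hl
      have h5L : 2.236067 * (15/4) ≤ Real.sqrt 5 * Real.logb goldenRatio (Real.sqrt 5 * 3) :=
        mul_le_mul s5_lb hl (by norm_num) s5_pos.le
      have hub : goldenRatio ^ 5 ≤ 11.0902 := (gpow_ub 5).trans (by norm_num)
      linarith [s5_lb]
    · -- n = 4, X = 5
      have hf : (Nat.fib 6 : ℝ) = 8 := by norm_num [Nat.fib]
      norm_num [hf]
      have hl : ((5:ℕ) : ℝ) / ((1:ℕ) : ℝ) ≤ Real.logb goldenRatio (Real.sqrt 5 * 5) := by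
        apply logb_ge 5 1 (by norm_num) (by positivity)
        calc goldenRatio ^ 5 ≤ 1.618034 ^ 5 := gpow_ub 5
          _ ≤ 11.0902 := by norm_num
          _ ≤ (Real.sqrt 5 * 5) ^ 1 := by simpa using by linarith [s5_lb]
      norm_num at hl
      have h5L : 2.236067 * 5 ≤ Real.sqrt 5 * Real.logb goldenRatio (Real.sqrt 5 * 5) :=
        mul_le_mul s5_lb hl (by norm_num) s5_pos.le
      have hub : goldenRatio ^ 6 ≤ 17.94435 := (gpow_ub 6).trans (by norm_num)
      linarith [s5_lb]
    · -- n = 5, X = 9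
      have hf : (Nat.fib 7 : ℝ) = 13 := by norm_num [Nat.fib]
      norm_num [hf]
      have hl : ((31:ℕ) : ℝ) / ((5:ℕ) : ℝ) ≤ Real.logb goldenRatio (Real.sqrt 5 * 9) := by
        apply logb_ge 31 5 (by norm_num) (by positivity)
        have h2 : (Real.sqrt 5) ^ 5 = 25 * Real.sqrt 5 := by
          rw [show (Real.sqrt 5) ^ 5 = ((Real.sqrt 5) ^ 2) ^ 2 * Real.sqrt 5 by ring, hs5]
          norm_num
        have h9 : (Real.sqrt 5 * 9) ^ 5 = 1476225 * Real.sqrt 5 := by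
          rw [mul_pow, h2]; ring
        rw [h9]
        calc goldenRatio ^ 31 ≤ 1.618034 ^ 31 := gpow_ub 31
          _ ≤ 3300000 := by norm_num
          _ ≤ 1476225 * 2.236067 := by norm_num
          _ ≤ 1476225 * Real.sqrt 5 := by linarith [s5_lb]
      norm_num at hl
      have h5L : 2.236067 * (31/5) ≤ Real.sqrt 5 * Real.logb goldenRatio (Real.sqrt 5 * 9) :=
        mul_le_mul s5_lb hl (by norm_num) s5_pos.le
      have hub : goldenRatio ^ 7 ≤ 29.0346 := (gpow_ub 7).trans (by norm_num)
      linarith [s5_lb]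
  · exact key_gen n h6

theorem stmt13 (n : ℕ) (hn : 2 ≤ n) :
    let Φ : ℝ := (1 + Real.sqrt 5) / 2
    let ψ : ℝ → ℝ := fun x => Real.logb Φ (Real.sqrt 5 * (Real.logb Φ (Real.sqrt 5 * x) + x) - 5 + 3 / x) - 2
    ψ ((Nat.fib (n + 2) : ℝ) - n + 1) ≥ n := by
  intro Φ ψ
  show Real.logb goldenRatio (Real.sqrt 5 * (Real.logb goldenRatio
      (Real.sqrt 5 * ((Nat.fib (n+2) : ℝ) - n + 1)) + ((Nat.fib (n+2) : ℝ) - n + 1))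
      - 5 + 3 / ((Nat.fib (n+2) : ℝ) - n + 1)) - 2 ≥ n
  rw [ge_iff_le, le_sub_iff_add_le]
  have hkey := key n hn
  have hpos : (0:ℝ) < goldenRatio ^ (n+2) := pow_pos goldenRatio_pos _
  calc (n:ℝ) + 2 = Real.logb goldenRatio (goldenRatio ^ (n+2)) := by
        rw [Real.logb_pow, Real.logb_self_eq_one one_lt_goldenRatio]
        push_cast; ring
    _ ≤ _ := Real.logb_le_logb_of_le one_lt_goldenRatio hpos hkey
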